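/- The map R descends to the circle ℝ/2ℤ: there is a continuous map R̄ : ℝ/2ℤ → ℝ/2ℤ satisfying R̄([y]) = [R(y)] for every y ∈ [0,2), and R̄ is a covering map each of whose fibers has exactly 3 elements (a threefold covering of the circle). -/

import Mathlib

open Set

noncomputable section

/-- The golden ratio `(1+√5)/2`. -/
def gold : ℝ := (1 + Real.sqrt 5) / 2

/-- The renormalization map `R` on `[0,2)`. -/
def Rmap (y : ℝ) : ℝ :=
  if y < 2 - gold then gold ^ 3 * y
  else if y < 4 - 2 * gold then y + 2 * gold - 2
  else if y < 2 * gold - 2 then gold ^ 3 * y - 2 * gold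
  else if y < gold then y - 2 * gold + 2
  else gold ^ 3 * y - 4 * gold

lemma sqrt5_lt : Real.sqrt 5 < 2.24 := by
  rw [show (2.24:ℝ) = Real.sqrt (2.24^2) by rw [Real.sqrt_sq (by norm_num)]]
  exact Real.sqrt_lt_sqrt (by norm_num) (by norm_num)

lemma lt_sqrt5 : (2.23:ℝ) < Real.sqrt 5 := by
  rw [show (2.23:ℝ) = Real.sqrt (2.23^2) by rw [Real.sqrt_sq (by norm_num)]]
  exact Real.sqrt_lt_sqrt (by norm_num) (by norm_num)

lemma gold_lb : (1.6:ℝ) < gold := by unfold gold ; nlinarith [lt_sqrt5]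
lemma gold_ub : gold < 1.62 := by unfold gold ; nlinarith [sqrt5_lt]

lemma gsq : gold ^ 2 = gold + 1 := by
  have h : Real.sqrt 5 ^ 2 = 5 := Real.sq_sqrt (by norm_num)
  unfold gold ; nlinarith [h]

lemma gcube : gold ^ 3 = 2 * gold + 1 := by
  have h := gsq
  nlinarith [h]

/-- The staircase part of the lift. -/
def Tf (y : ℝ) : ℝ :=
  min y (2 - gold) + min (max (y - (4 - 2 * gold)) 0) (4 * gold - 6) + max (y - gold) 0

/-- The continuous lift of `Rmap` on `[0,2]`. -/
def F0 (y : ℝ) : ℝ := y + 2 * gold * Tf y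

lemma continuous_Tf : Continuous Tf := by
  unfold Tf
  fun_prop

lemma continuous_F0 : Continuous F0 := by
  exact continuous_id.add (continuous_const.mul continuous_Tf)

lemma monotone_Tf : Monotone Tf := by
  intro x y hxy
  unfold Tf
  gcongr <;> simp [hxy]

lemma strictMono_F0 : StrictMono F0 := by
  intro x y hxy
  unfold F0
  have h1 : Tf x ≤ Tf y := monotone_Tf hxy.le
  nlinarith [gold_lb]

lemma F0_zero : F0 0 = 0 := by
  unfold F0 Tf
  have h1 := gold_lb; have h2 := gold_ub
  rw [min_eq_left (by linarith), max_eq_right (by linarith), max_eq_right (by linarith),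
    min_eq_left (by linarith)]
  ring

lemma F0_two : F0 2 = 6 := by
  unfold F0 Tf
  have h1 := gold_lb; have h2 := gold_ub
  rw [min_eq_right (by linarith), max_eq_left (by linarith), min_eq_right (by linarith),
    max_eq_left (by linarith)]
  nlinarith [gsq]

lemma F0_coe (y : ℝ) (hy : y ∈ Ico (0:ℝ) 2) :
    ((F0 y : ℝ) : AddCircle (2:ℝ)) = ((Rmap y : ℝ) : AddCircle (2:ℝ)) := by
  obtain ⟨hy0, hy2⟩ := hy
  have hg1 := gold_lb; have hg2 := gold_ub
  unfold Rmap
  split_ifs with h1 h2 h3 h4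
  · rw [show F0 y = gold ^ 3 * y by
      unfold F0 Tf
      have e1 : min y (2 - gold) = y := min_eq_left (by linarith)
      have e2 : max (y - (4 - 2 * gold)) 0 = 0 := max_eq_right (by linarith)
      have e3 : min (0:ℝ) (4 * gold - 6) = 0 := min_eq_left (by linarith)
      have e4 : max (y - gold) 0 = 0 := max_eq_right (by linarith)
      rw [e1, e2, e3, e4]
      linear_combination (-y) * gcube]
  · rw [show F0 y = y + 2 * gold - 2 by
      unfold F0 Tf
      have e1 : min y (2 - gold) = 2 - gold := min_eq_right (by linarith)
      have e2 : max (y - (4 - 2 * gold)) 0 = 0 := max_eq_right (by linarith)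
      have e3 : min (0:ℝ) (4 * gold - 6) = 0 := min_eq_left (by linarith)
      have e4 : max (y - gold) 0 = 0 := max_eq_right (by linarith)
      rw [e1, e2, e3, e4]
      linear_combination (-2) * gsq]
  · rw [show F0 y = (gold ^ 3 * y - 2 * gold) + 2 by
      unfold F0 Tf
      have e1 : min y (2 - gold) = 2 - gold := min_eq_right (by linarith)
      have e2 : max (y - (4 - 2 * gold)) 0 = y - (4 - 2 * gold) := max_eq_left (by linarith)
      have e3 : min (y - (4 - 2 * gold)) (4 * gold - 6) = y - (4 - 2 * gold) :=
        min_eq_left (by linarith)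
      have e4 : max (y - gold) 0 = 0 := max_eq_right (by linarith)
      rw [e1, e2, e3, e4]
      linear_combination (-y) * gcube + 2 * gsq]
    exact AddCircle.coe_add_period 2 _
  · rw [show F0 y = ((y - 2 * gold + 2) + 2) + 2 by
      unfold F0 Tf
      have e1 : min y (2 - gold) = 2 - gold := min_eq_right (by linarith)
      have e2 : max (y - (4 - 2 * gold)) 0 = y - (4 - 2 * gold) := max_eq_left (by linarith)
      have e3 : min (y - (4 - 2 * gold)) (4 * gold - 6) = 4 * gold - 6 :=
        min_eq_right (by linarith)
      have e4 : max (y - gold) 0 = 0 := max_eq_right (by linarith)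
      rw [e1, e2, e3, e4]
      linear_combination 6 * gsq]
    rw [AddCircle.coe_add_period, AddCircle.coe_add_period]
  · rw [show F0 y = ((gold ^ 3 * y - 4 * gold) + 2) + 2 by
      unfold F0 Tf
      have e1 : min y (2 - gold) = 2 - gold := min_eq_right (by linarith)
      have e2 : max (y - (4 - 2 * gold)) 0 = y - (4 - 2 * gold) := max_eq_left (by linarith)
      have e3 : min (y - (4 - 2 * gold)) (4 * gold - 6) = 4 * gold - 6 :=
        min_eq_right (by linarith)
      have e4 : max (y - gold) 0 = y - gold := max_eq_left (by linarith)
      rw [e1, e2, e3, e4]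
      linear_combination (-y) * gcube + 4 * gsq]
    rw [AddCircle.coe_add_period, AddCircle.coe_add_period]

instance fact02 : Fact ((0:ℝ) < 2) := ⟨by norm_num⟩

lemma coe_int_mul_two_eq_zero (k : ℤ) : (((2 * k : ℝ)) : AddCircle (2:ℝ)) = 0 := by
  rw [AddCircle.coe_eq_zero_iff]
  exact ⟨k, by rw [zsmul_eq_mul]; ring⟩

/-- The periodic correction term. -/
def gfun : AddCircle (2:ℝ) → ℝ := AddCircle.liftIco 2 0 (fun y => F0 y - 3 * y)

lemma gfun_coe {y : ℝ} (hy : y ∈ Ico (0:ℝ) 2) : gfun (y : AddCircle (2:ℝ)) = F0 y - 3 * y :=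
  AddCircle.liftIco_coe_apply (by simpa using hy)

lemma continuous_gfun : Continuous gfun := by
  apply AddCircle.liftIco_continuous
  · norm_num [F0_zero, F0_two]
  · exact (continuous_F0.sub (continuous_const.mul continuous_id)).continuousOn

/-- The global lift of the renormalization map. -/
def Fl (x : ℝ) : ℝ := 3 * x + gfun (x : AddCircle (2:ℝ))

lemma continuous_Fl : Continuous Fl := by
  exact (continuous_const.mul continuous_id).add
    (continuous_gfun.comp (AddCircle.continuous_mk' 2))

lemma Fl_coe_eq {y : ℝ} (hy : y ∈ Ico (0:ℝ) 2) : Fl y = F0 y := by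
  unfold Fl; rw [gfun_coe hy]; ring

lemma Fl_periodic (x : ℝ) (k : ℤ) : Fl (x + 2 * k) = Fl x + 6 * k := by
  unfold Fl
  have h : ((x + 2 * k : ℝ) : AddCircle (2:ℝ)) = (x : AddCircle (2:ℝ)) := by
    rw [AddCircle.coe_add, coe_int_mul_two_eq_zero, add_zero]
  rw [h]; ring

lemma Fl_zero : Fl 0 = 0 := by
  rw [Fl_coe_eq (by constructor <;> norm_num), F0_zero]

lemma Fl_two : Fl 2 = 6 := by
  have h := Fl_periodic 0 1
  norm_num [Fl_zero] at h
  exact h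

lemma Fl_smOn : StrictMonoOn Fl (Icc (0:ℝ) 2) := by
  intro x hx y hy hxy
  rcases eq_or_lt_of_le hy.2 with h2 | h2
  · rw [h2, Fl_two, Fl_coe_eq ⟨hx.1, by linarith [h2 ▸ hxy]⟩]
    calc F0 x < F0 2 := strictMono_F0 (by linarith [h2 ▸ hxy])
    _ = 6 := F0_two
  · rw [Fl_coe_eq ⟨hx.1, by linarith⟩, Fl_coe_eq ⟨hy.1, h2⟩]
    exact strictMono_F0 hxy

lemma Fl_even (k : ℤ) : Fl (2 * k) = 6 * k := by
  have h := Fl_periodic 0 k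
  rw [zero_add, Fl_zero, zero_add] at h
  exact h

lemma strictMono_Fl : StrictMono Fl := by
  intro x y hxy
  set k : ℤ := ⌊x / 2⌋ with hk
  have hx1 : (k : ℝ) ≤ x / 2 := Int.floor_le _
  have hx2 : x / 2 < k + 1 := Int.lt_floor_add_one _
  have hxm : x - 2 * k ∈ Icc (0:ℝ) 2 := ⟨by linarith, by linarith⟩
  have hFx : Fl x = Fl (x - 2 * k) + 6 * k := by
    have := Fl_periodic (x - 2 * k) k; rw [sub_add_cancel] at this; rw [this]
  by_cases hy2 : y ≤ 2 * k + 2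
  · have hym : y - 2 * k ∈ Icc (0:ℝ) 2 := ⟨by linarith, by linarith⟩
    have hFy : Fl y = Fl (y - 2 * k) + 6 * k := by
      have := Fl_periodic (y - 2 * k) k; rw [sub_add_cancel] at this; rw [this]
    rw [hFx, hFy]
    have := Fl_smOn hxm hym (by linarith)
    linarith
  · push_neg at hy2
    set m : ℤ := ⌊y / 2⌋ with hm
    have hy1 : (m : ℝ) ≤ y / 2 := Int.floor_le _
    have hy2' : y / 2 < m + 1 := Int.lt_floor_add_one _
    have hkm : (k : ℝ) + 1 ≤ m := by
      have : (k : ℝ) + 1 < m + 1 := by linarith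
      have h2 : k + 1 ≤ m := by exact_mod_cast Int.lt_add_one_iff.mp (by exact_mod_cast this)
      exact_mod_cast h2
    have hym : y - 2 * m ∈ Icc (0:ℝ) 2 := ⟨by linarith, by linarith⟩
    have hFy : Fl y = Fl (y - 2 * m) + 6 * m := by
      have := Fl_periodic (y - 2 * m) m; rw [sub_add_cancel] at this; rw [this]
    have h1 : Fl (x - 2 * k) < Fl 2 := by
      rcases eq_or_lt_of_le hxm.2 with h | h
      · exfalso; have : x = 2 * k + 2 := by linarith [h]
        rw [this] at hx2; push_cast at hx2; linarith
      · exact Fl_smOn hxm ⟨by norm_num, le_refl 2⟩ h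
    have h2 : (0:ℝ) ≤ Fl (y - 2 * m) := by
      rw [← Fl_zero]
      exact Fl_smOn.monotoneOn ⟨le_refl 0, by norm_num⟩ hym hym.1
    rw [hFx, hFy, Fl_two] at *
    linarith
lemma surjective_Fl : Function.Surjective Fl := by
  intro z
  set a : ℤ := ⌊z / 6⌋ with ha
  have h1 : (a : ℝ) ≤ z / 6 := Int.floor_le _
  have h2 : z / 6 < a + 1 := Int.lt_floor_add_one _
  have e1 : Fl (2 * (a:ℝ)) = 6 * a := Fl_even a
  have e2 : Fl (2 * ((a:ℝ) + 1)) = 6 * a + 6 := by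
    have h := Fl_even (a + 1); push_cast at h; linarith
  have hz : z ∈ Icc (Fl (2 * (a:ℝ))) (Fl (2 * ((a:ℝ) + 1))) := by
    rw [e1, e2]; constructor <;> linarith
  obtain ⟨x, _, hx⟩ := intermediate_value_Icc
    (by linarith : (2 * (a:ℝ)) ≤ 2 * ((a:ℝ) + 1))
    continuous_Fl.continuousOn hz
  exact ⟨x, hx⟩

/-- `Fl` as an order isomorphism of `ℝ`. -/
def Fiso : ℝ ≃o ℝ := StrictMono.orderIsoOfSurjective Fl strictMono_Fl surjective_Fl

lemma Fiso_apply (x : ℝ) : Fiso x = Fl x := rfl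
lemma continuous_Fiso_symm : Continuous Fiso.symm :=
  Fiso.toHomeomorph.symm.continuous
lemma Fl_Fiso_symm (u : ℝ) : Fl (Fiso.symm u) = u := Fiso.apply_symm_apply u
lemma Fiso_symm_Fl (x : ℝ) : Fiso.symm (Fl x) = x := Fiso.symm_apply_apply x

/-- The induced map on the circle. -/
def Rbar : AddCircle (2:ℝ) → AddCircle (2:ℝ) :=
  AddCircle.liftIco 2 0 (fun y => ((F0 y : ℝ) : AddCircle (2:ℝ)))

lemma continuous_Rbar : Continuous Rbar := by
  apply AddCircle.liftIco_continuous
  · show ((F0 0 : ℝ) : AddCircle (2:ℝ)) = ((F0 (0 + 2) : ℝ) : AddCircle (2:ℝ))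
    rw [F0_zero, zero_add, F0_two]
    rw [show ((0:ℝ) : AddCircle (2:ℝ)) = 0 from rfl]
    rw [show (6:ℝ) = 2 * ((3:ℤ):ℝ) by norm_num, coe_int_mul_two_eq_zero]
  · exact ((AddCircle.continuous_mk' 2).comp continuous_F0).continuousOn

lemma Rbar_coe (x : ℝ) : Rbar (x : AddCircle (2:ℝ)) = ((Fl x : ℝ) : AddCircle (2:ℝ)) := by
  obtain ⟨y, hy, hxy⟩ := AddCircle.eq_coe_Ico (x : AddCircle (2:ℝ))
  have hdiff : ((x - y : ℝ) : AddCircle (2:ℝ)) = 0 := by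
    rw [AddCircle.coe_sub, hxy, sub_self]
  rw [AddCircle.coe_eq_zero_iff] at hdiff
  obtain ⟨k, hk⟩ := hdiff
  rw [zsmul_eq_mul] at hk
  have hxk : x = y + 2 * k := by linarith [hk]
  rw [← hxy]
  unfold Rbar
  rw [AddCircle.liftIco_coe_apply (by simpa using hy)]
  rw [← Fl_coe_eq hy, hxk, Fl_periodic]
  rw [AddCircle.coe_add, show ((6 * (k:ℝ)) : ℝ) = 2 * ((3 * k : ℤ) : ℝ) by push_cast; ring,
    coe_int_mul_two_eq_zero, add_zero]

lemma Rbar_rmap (y : ℝ) (hy : y ∈ Ico (0:ℝ) 2) :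
    Rbar (y : AddCircle (2:ℝ)) = ((Rmap y : ℝ) : AddCircle (2:ℝ)) := by
  unfold Rbar
  rw [AddCircle.liftIco_coe_apply (by simpa using hy)]
  exact F0_coe y hy

lemma coe_equivIco (a : ℝ) (e : AddCircle (2:ℝ)) :
    (((AddCircle.equivIco 2 a e : ℝ)) : AddCircle (2:ℝ)) = e :=
  (AddCircle.equivIco 2 a).symm_apply_apply e

lemma equivIco_coe_of_mem {a x : ℝ} (hx : x ∈ Ico a (a + 2)) :
    ((AddCircle.equivIco 2 a ((x : ℝ) : AddCircle (2:ℝ))) : ℝ) = x := by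
  have h := AddCircle.coe_eq_coe_iff_of_mem_Ico
    (p := (2:ℝ)) (a := a) ((AddCircle.equivIco 2 a ((x : ℝ) : AddCircle (2:ℝ))).2) hx
  exact h.mp (coe_equivIco a _)

lemma mem_Ico_equivIco (a : ℝ) (e : AddCircle (2:ℝ)) :
    ((AddCircle.equivIco 2 a e : ℝ)) ∈ Ico a (a + 2) :=
  (AddCircle.equivIco 2 a e).2

lemma Fiso_symm_shift (u : ℝ) : Fiso.symm (u + 6) = Fiso.symm u + 2 := by
  have h : Fl (Fiso.symm u + 2) = u + 6 := by
    have h2 := Fl_periodic (Fiso.symm u) 1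
    norm_num at h2
    rw [h2, Fl_Fiso_symm]
  rw [← h, Fiso_symm_Fl]

lemma coe_two_j_eq_zero (j : Fin 3) : (((2 * (j:ℕ) : ℝ)) : AddCircle (2:ℝ)) = 0 := by
  have := coe_int_mul_two_eq_zero (j : ℕ)
  push_cast at this ⊢
  exact this

/-- sheet number of a point of the total space. -/
def sheet (c : ℝ) (e : AddCircle (2:ℝ)) : Fin 3 :=
  if Fl ((AddCircle.equivIco 2 (Fiso.symm c) e : ℝ)) < c + 2 then 0
  else if Fl ((AddCircle.equivIco 2 (Fiso.symm c) e : ℝ)) < c + 4 then 1 else 2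

/-- inverse of the trivialization. -/
def invF (c : ℝ) (q : AddCircle (2:ℝ) × Fin 3) : AddCircle (2:ℝ) :=
  ((Fiso.symm ((AddCircle.equivIco 2 c q.1 : ℝ) + 2 * (q.2 : ℕ)) : ℝ) : AddCircle (2:ℝ))

lemma Rbar_eq_rep (c : ℝ) (e : AddCircle (2:ℝ)) :
    Rbar e = ((Fl ((AddCircle.equivIco 2 (Fiso.symm c) e : ℝ)) : ℝ) : AddCircle (2:ℝ)) := by
  conv_lhs => rw [← coe_equivIco (Fiso.symm c) e]
  rw [Rbar_coe]

lemma key (c : ℝ) (e : AddCircle (2:ℝ)) (he : Rbar e ≠ ((c:ℝ) : AddCircle (2:ℝ))) :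
    Fl ((AddCircle.equivIco 2 (Fiso.symm c) e : ℝ)) ∈ Ioo c (c + 6) ∧
    Fl ((AddCircle.equivIco 2 (Fiso.symm c) e : ℝ)) ≠ c + 2 ∧
    Fl ((AddCircle.equivIco 2 (Fiso.symm c) e : ℝ)) ≠ c + 4 := by
  set x := (AddCircle.equivIco 2 (Fiso.symm c) e : ℝ) with hx
  have hmem := mem_Ico_equivIco (Fiso.symm c) e
  rw [← hx] at hmem
  have h1 : c ≤ Fl x := by
    have := strictMono_Fl.monotone hmem.1
    rwa [Fl_Fiso_symm] at this
  have hne : Fl x ≠ c := by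
    intro h
    apply he
    rw [Rbar_eq_rep c e, ← hx, h]
  have h2 : Fl x < c + 6 := by
    have hlt := strictMono_Fl hmem.2
    have e2 : Fl (Fiso.symm c + 2) = c + 6 := by
      have h3 := Fl_periodic (Fiso.symm c) 1
      norm_num at h3
      rw [h3, Fl_Fiso_symm]
    rwa [e2] at hlt
  refine ⟨⟨lt_of_le_of_ne h1 (Ne.symm hne), h2⟩, ?_, ?_⟩
  · intro h
    apply he
    rw [Rbar_eq_rep c e, ← hx, h, AddCircle.coe_add_period]
  · intro h
    apply he
    rw [Rbar_eq_rep c e, ← hx, h, show c + 4 = (c + 2) + 2 by ring,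
      AddCircle.coe_add_period, AddCircle.coe_add_period]

lemma sheet_spec (c : ℝ) (e : AddCircle (2:ℝ)) (he : Rbar e ≠ ((c:ℝ) : AddCircle (2:ℝ))) :
    Fl ((AddCircle.equivIco 2 (Fiso.symm c) e : ℝ)) - 2 * ((sheet c e : Fin 3) : ℕ) ∈
      Ioo c (c + 2) := by
  obtain ⟨⟨hl, hu⟩, hne2, hne4⟩ := key c e he
  unfold sheet
  split_ifs with h1 h2
  · simpa using ⟨hl, h1⟩
  · push_neg at h1
    constructor
    · push_cast [Fin.val_one]; nlinarith [lt_of_le_of_ne h1 (Ne.symm hne2)]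
    · push_cast [Fin.val_one]; nlinarith [h2]
  · push_neg at h1 h2
    constructor
    · push_cast [Fin.val_two]; nlinarith [lt_of_le_of_ne h2 (Ne.symm hne4)]
    · push_cast [Fin.val_two]; nlinarith [hu]

lemma Rbar_invF (c : ℝ) (q : AddCircle (2:ℝ) × Fin 3)
    (hq : q.1 ≠ ((c:ℝ) : AddCircle (2:ℝ))) : Rbar (invF c q) = q.1 := by
  unfold invF
  rw [Rbar_coe, Fl_Fiso_symm, AddCircle.coe_add, coe_two_j_eq_zero, add_zero, coe_equivIco]
lemma left_inv_triv (c : ℝ) (e : AddCircle (2:ℝ)) (he : Rbar e ≠ ((c:ℝ) : AddCircle (2:ℝ))) :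
    invF c (Rbar e, sheet c e) = e := by
  set x := (AddCircle.equivIco 2 (Fiso.symm c) e : ℝ) with hx
  set j := sheet c e with hj
  have hmem : Fl x - 2 * (j : ℕ) ∈ Ioo c (c + 2) := sheet_spec c e he
  have hRe : Rbar e = ((Fl x - 2 * (j:ℕ) : ℝ) : AddCircle (2:ℝ)) := by
    rw [Rbar_eq_rep c e, ← hx]
    have h9 : ((Fl x : ℝ) : AddCircle (2:ℝ)) =
        (((Fl x - 2 * (j:ℕ)) + 2 * (j:ℕ) : ℝ) : AddCircle (2:ℝ)) := by norm_num
    rw [h9, AddCircle.coe_add, coe_two_j_eq_zero, add_zero]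
  unfold invF
  simp only
  rw [hRe, equivIco_coe_of_mem ⟨hmem.1.le, hmem.2⟩]
  rw [show Fl x - 2 * (j:ℕ) + 2 * (j:ℕ) = Fl x by ring, Fiso_symm_Fl, hx, coe_equivIco]

lemma right_inv_triv (c : ℝ) (q : AddCircle (2:ℝ) × Fin 3)
    (hq : q.1 ≠ ((c:ℝ) : AddCircle (2:ℝ))) :
    (Rbar (invF c q), sheet c (invF c q)) = q := by
  obtain ⟨z, j⟩ := q
  simp only at hq ⊢
  have h1 : Rbar (invF c (z, j)) = z := Rbar_invF c (z, j) hq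
  rw [h1]
  have humem := mem_Ico_equivIco c z
  set u := (AddCircle.equivIco 2 c z : ℝ) with hu
  have huc : u ≠ c := by
    intro h
    apply hq
    rw [← coe_equivIco c z, ← hu, h]
  have hulb : c < u := lt_of_le_of_ne humem.1 (Ne.symm huc)
  set x := Fiso.symm (u + 2 * (j:ℕ)) with hxdef
  have hFlx : Fl x = u + 2 * (j:ℕ) := Fl_Fiso_symm _
  have hjle : ((j:ℕ) : ℝ) ≤ 2 := by
    have : (j:ℕ) ≤ 2 := Nat.lt_succ_iff.mp j.2
    exact_mod_cast this
  have hxmem : x ∈ Ico (Fiso.symm c) (Fiso.symm c + 2) := by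
    constructor
    · exact (Fiso.symm.strictMono (by nlinarith : c < u + 2 * (j:ℕ))).le
    · have h6 : u + 2 * (j:ℕ) < c + 6 := by nlinarith [humem.2]
      have := Fiso.symm.strictMono h6
      rwa [Fiso_symm_shift] at this
  have hrep : (AddCircle.equivIco 2 (Fiso.symm c) (invF c (z, j)) : ℝ) = x := by
    unfold invF
    simp only
    rw [← hu, ← hxdef, equivIco_coe_of_mem hxmem]
  have : sheet c (invF c (z, j)) = j := by
    unfold sheet
    rw [hrep, hFlx]
    have hub := humem.2
    fin_cases j
    · rw [if_pos (by push_cast; linarith)]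
      rfl
    · rw [if_neg (by push_cast [Fin.val_one]; linarith),
        if_pos (by push_cast [Fin.val_one]; linarith)]
      rfl
    · rw [if_neg (by push_cast [Fin.val_two]; linarith),
        if_neg (by push_cast [Fin.val_two]; linarith)]
      rfl
  rw [this]

lemma continuousOn_toFun_triv (c : ℝ) :
    ContinuousOn (fun e => (Rbar e, sheet c e))
      (Rbar ⁻¹' ({((c:ℝ) : AddCircle (2:ℝ))}ᶜ)) := by
  intro e he
  have he' : Rbar e ≠ ((c:ℝ) : AddCircle (2:ℝ)) := he
  apply ContinuousAt.continuousWithinAt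
  refine ContinuousAt.prodMk continuous_Rbar.continuousAt ?_
  set w : AddCircle (2:ℝ) → ℝ :=
    fun e' => Fl ((AddCircle.equivIco 2 (Fiso.symm c) e' : ℝ)) with hwdef
  have hene : e ≠ ((Fiso.symm c : ℝ) : AddCircle (2:ℝ)) := by
    intro h
    apply he'
    rw [h, Rbar_coe, Fl_Fiso_symm]
  have hrep : ContinuousAt (fun e' => (AddCircle.equivIco 2 (Fiso.symm c) e' : ℝ)) e :=
    continuous_subtype_val.continuousAt.comp
      (AddCircle.continuousAt_equivIco 2 (Fiso.symm c) hene)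
  have hw : ContinuousAt w e := continuous_Fl.continuousAt.comp hrep
  obtain ⟨⟨hl, hu⟩, hne2, hne4⟩ := key c e he'
  have hev : ∀ᶠ e' in nhds e, sheet c e' = sheet c e := by
    rcases lt_or_gt_of_ne hne2 with h2 | h2
    · have hnb : w ⁻¹' (Iio (c + 2)) ∈ nhds e := hw.preimage_mem_nhds (Iio_mem_nhds h2)
      filter_upwards [hnb] with e' he2
      replace he2 : Fl ((AddCircle.equivIco 2 (Fiso.symm c) e' : ℝ)) < c + 2 := he2
      simp only [sheet]
      rw [if_pos he2, if_pos h2]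
    · rcases lt_or_gt_of_ne hne4 with h4 | h4
      · have hnb : w ⁻¹' (Ioo (c + 2) (c + 4)) ∈ nhds e :=
          hw.preimage_mem_nhds (Ioo_mem_nhds h2 h4)
        filter_upwards [hnb] with e' he2
        replace he2 : c + 2 < Fl ((AddCircle.equivIco 2 (Fiso.symm c) e' : ℝ)) ∧
            Fl ((AddCircle.equivIco 2 (Fiso.symm c) e' : ℝ)) < c + 4 := he2
        simp only [sheet]
        rw [if_neg (not_lt.2 he2.1.le), if_pos he2.2, if_neg (not_lt.2 h2.le), if_pos h4]
      · have hnb : w ⁻¹' (Ioi (c + 4)) ∈ nhds e := hw.preimage_mem_nhds (Ioi_mem_nhds h4)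
        filter_upwards [hnb] with e' he2
        replace he2 : c + 4 < Fl ((AddCircle.equivIco 2 (Fiso.symm c) e' : ℝ)) := he2
        simp only [sheet]
        rw [if_neg (not_lt.2 (by linarith)), if_neg (not_lt.2 he2.le),
          if_neg (not_lt.2 (by linarith)), if_neg (not_lt.2 h4.le)]
  exact Filter.EventuallyEq.continuousAt hev

lemma continuousOn_invF (c : ℝ) :
    ContinuousOn (invF c)
      ((({((c:ℝ) : AddCircle (2:ℝ))}ᶜ : Set (AddCircle (2:ℝ)))) ×ˢ univ) := by
  intro q hq
  apply ContinuousAt.continuousWithinAt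
  have h1 : q.1 ≠ ((c:ℝ) : AddCircle (2:ℝ)) := hq.1
  have hrep : ContinuousAt
      (fun q' : AddCircle (2:ℝ) × Fin 3 => (AddCircle.equivIco 2 c q'.1 : ℝ)) q :=
    (continuous_subtype_val.continuousAt.comp
      (AddCircle.continuousAt_equivIco 2 c h1)).comp continuousAt_fst
  have hj : Continuous (fun q' : AddCircle (2:ℝ) × Fin 3 => (2 * ((q'.2 : ℕ) : ℝ) : ℝ)) := by
    have h : Continuous (fun j : Fin 3 => (2 * ((j:ℕ) : ℝ) : ℝ)) := continuous_of_discreteTopology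
    exact h.comp continuous_snd
  exact ((AddCircle.continuous_mk' 2).continuousAt).comp
    ((continuous_Fiso_symm.continuousAt).comp (hrep.add hj.continuousAt))

/-- The local trivialization of `Rbar` away from `[c]`. -/
def trivAt (c : ℝ) : Bundle.Trivialization (Fin 3) Rbar where
  toFun := fun e => (Rbar e, sheet c e)
  invFun := invF c
  source := Rbar ⁻¹' ({((c:ℝ) : AddCircle (2:ℝ))}ᶜ)
  target := (({((c:ℝ) : AddCircle (2:ℝ))}ᶜ : Set (AddCircle (2:ℝ)))) ×ˢ univ
  map_source' := fun e he => ⟨he, mem_univ _⟩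
  map_target' := fun q hq => by
    have h := Rbar_invF c q hq.1
    simp only [mem_preimage, mem_compl_iff, mem_singleton_iff]
    rw [h]
    exact hq.1
  left_inv' := fun e he => left_inv_triv c e he
  right_inv' := fun q hq => right_inv_triv c q hq.1
  open_source := isOpen_compl_singleton.preimage continuous_Rbar
  open_target := isOpen_compl_singleton.prod isOpen_univ
  continuousOn_toFun := continuousOn_toFun_triv c
  continuousOn_invFun := continuousOn_invF c
  baseSet := {((c:ℝ) : AddCircle (2:ℝ))}ᶜ
  open_baseSet := isOpen_compl_singleton
  source_eq := rfl
  target_eq := rfl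
  proj_toFun := fun e _ => rfl

lemma ne_shift_one (z : AddCircle (2:ℝ)) :
    z ≠ (((AddCircle.equivIco 2 0 z : ℝ) + 1 : ℝ) : AddCircle (2:ℝ)) := by
  set r : ℝ := (AddCircle.equivIco 2 0 z : ℝ) with hr
  intro h
  have h0 : ((r : ℝ) : AddCircle (2:ℝ)) = z := coe_equivIco 0 z
  rw [← h0] at h
  have h1 : ((1:ℝ) : AddCircle (2:ℝ)) = 0 := by
    rw [show (1:ℝ) = (r + 1) - r by ring, AddCircle.coe_sub, ← h, sub_self]
  rw [AddCircle.coe_eq_zero_iff] at h1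
  obtain ⟨k, hk⟩ := h1
  rw [zsmul_eq_mul] at hk
  rcases le_or_gt 1 k with hk1 | hk1
  · have : (1:ℝ) ≤ (k:ℝ) := by exact_mod_cast hk1
    nlinarith
  · have : (k:ℝ) ≤ 0 := by exact_mod_cast (by omega : k ≤ 0)
    nlinarith

theorem isCoveringMap_Rbar : IsCoveringMap Rbar := by
  apply IsFiberBundle.isCoveringMap (F := Fin 3)
  intro z
  exact ⟨trivAt ((AddCircle.equivIco 2 0 z : ℝ) + 1), ne_shift_one z⟩

theorem card_fiber_Rbar (z : AddCircle (2:ℝ)) : Nat.card (Rbar ⁻¹' {z}) = 3 := by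
  have h := (trivAt ((AddCircle.equivIco 2 0 z : ℝ) + 1)).preimageSingletonHomeomorph
    (ne_shift_one z)
  rw [Nat.card_congr h.toEquiv, Nat.card_eq_fintype_card, Fintype.card_fin]

/-- The renormalization map descends to a continuous threefold covering of the circle
`ℝ/2ℤ`. -/
theorem Rmap_descends_to_threefold_covering :
    ∃ Rbar : AddCircle (2 : ℝ) → AddCircle (2 : ℝ),
      Continuous Rbar ∧
      (∀ y ∈ Set.Ico (0 : ℝ) 2, Rbar (y : AddCircle (2 : ℝ)) = (Rmap y : AddCircle (2 : ℝ))) ∧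
      IsCoveringMap Rbar ∧
      ∀ z : AddCircle (2 : ℝ), Nat.card (Rbar ⁻¹' {z}) = 3 := by
  exact ⟨Rbar, continuous_Rbar, fun y hy => Rbar_rmap y hy, isCoveringMap_Rbar,
    card_fiber_Rbar⟩

end
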